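/- There is a constant C=C(K)>0 with the following property: whenever U⁺=(p⁺,v₁⁺,v₂⁺,H₁⁺,H₂⁺,S⁺) is C¹ on Ω_T, φ is C¹ on ∂Ω_T, both vanish for t<0, the boundary condition v_N⁺ = ∂₀φ − φ ∂₁v̂_N⁺ holds on {x₁=0} (with v_N⁺=v₁⁺−v₂⁺∂₂Ψ̂⁺ and ∂₀=∂_t+v̂₂⁺∂₂), and all norms below are finite, then ‖∂_tφ‖_{L²(∂Ω_T)} ≤ C( ‖U⁺‖_{L²(Ω_T)} + ‖∂₁U⁺‖_{L²(Ω_T)} + ‖φ‖_{L²(∂Ω_T)} + ‖∂₂φ‖_{L²(∂Ω_T)} ). -/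

import Mathlib

noncomputable section
open MeasureTheory

/-- Space-time points `(t, x₁, x₂)`. -/
abbrev P2 : Type := ℝ × ℝ × ℝ

/-- Directional derivative. -/
def D {E : Type*} [NormedAddCommGroup E] [NormedSpace ℝ E]
    (v : P2) (f : P2 → E) (p : P2) : E := fderiv ℝ f p v

/-- Derivative of a boundary function of `(t, x₂)`. -/
def Db (v : ℝ × ℝ) (f : ℝ × ℝ → ℝ) (q : ℝ × ℝ) : ℝ := fderiv ℝ f q v

def vIx (j : Fin 2) : Fin 6 := ⟨1 + j.1, by omega⟩
def hIx (k : Fin 2) : Fin 6 := ⟨3 + k.1, by omega⟩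

/-- The unique symmetric 6×6 matrix `N_j(H)` with quadratic form
`(N_j(H)Y,Y) = 2(y_{v_j}(y_p + (H,y_H)) − H_j(y_v,y_H))`. -/
def Nmat (H : Fin 2 → ℝ) (j : Fin 2) : Matrix (Fin 6) (Fin 6) ℝ :=
  Matrix.single 0 (vIx j) 1 + Matrix.single (vIx j) 0 1
    + ∑ k : Fin 2, (Matrix.single (vIx j) (hIx k) (H k)
        + Matrix.single (hIx k) (vIx j) (H k))
    - ∑ k : Fin 2, (Matrix.single (vIx k) (hIx k) (H j)
        + Matrix.single (hIx k) (vIx k) (H j))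

/-- Polytropic density `ρ(p,S) = A p^{1/γ} e^{−S/γ}`. -/
def rho (A γ q S : ℝ) : ℝ := A * q ^ (1 / γ) * Real.exp (-(S / γ))

/-- `A₀(U) = diag(1/(γp), ρ, ρ, 1, 1, 1)` for a polytropic gas. -/
def A0m (A γ : ℝ) (u : Fin 6 → ℝ) : Matrix (Fin 6) (Fin 6) ℝ :=
  Matrix.diagonal ![1 / (γ * u 0), rho A γ (u 0) (u 5), rho A γ (u 0) (u 5), 1, 1, 1]

def Hof (u : Fin 6 → ℝ) : Fin 2 → ℝ := fun k => u (hIx k)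

/-- `A_j(U) = v_j A₀(U) + N_j(H)`, `j = 1,2` (indexed by `Fin 2`). -/
def Am (A γ : ℝ) (j : Fin 2) (u : Fin 6 → ℝ) : Matrix (Fin 6) (Fin 6) ℝ :=
  u (vIx j) • A0m A γ u + Nmat (Hof u) j

/-- Lifting function `Ψ^s(t,x) = χ(s·x₁)φ(t,x₂)`, `s = ±1`. -/
def Psi (χ : ℝ → ℝ) (φ : ℝ × ℝ → ℝ) (s : ℝ) (p : P2) : ℝ :=
  χ (s * p.2.1) * φ (p.1, p.2.2)

/-- `Φ^s(t,x) = s·x₁ + Ψ^s(t,x)`. -/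
def Phi (χ : ℝ → ℝ) (φ : ℝ × ℝ → ℝ) (s : ℝ) (p : P2) : ℝ :=
  s * p.2.1 + Psi χ φ s p

/-- `v_N = v₁ − v₂∂₂Ψ`. -/
def vN (χ : ℝ → ℝ) (φ : ℝ × ℝ → ℝ) (s : ℝ) (W : P2 → Fin 6 → ℝ) (p : P2) : ℝ :=
  W p 1 - W p 2 * D (0, 0, 1) (Psi χ φ s) p

/-- `H_N = H₁ − H₂∂₂Ψ`. -/
def HN (χ : ℝ → ℝ) (φ : ℝ × ℝ → ℝ) (s : ℝ) (W : P2 → Fin 6 → ℝ) (p : P2) : ℝ :=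
  W p 3 - W p 4 * D (0, 0, 1) (Psi χ φ s) p

/-- `H_τ = H₁∂₂Ψ + H₂`. -/
def Hτ (χ : ℝ → ℝ) (φ : ℝ × ℝ → ℝ) (s : ℝ) (W : P2 → Fin 6 → ℝ) (p : P2) : ℝ :=
  W p 3 * D (0, 0, 1) (Psi χ φ s) p + W p 4

/-- `u = (v_N, v₂∂₁Φ)`. -/
def uvec (χ : ℝ → ℝ) (φ : ℝ × ℝ → ℝ) (s : ℝ) (W : P2 → Fin 6 → ℝ) (p : P2) : ℝ × ℝ :=
  (vN χ φ s W p, W p 2 * D (0, 1, 0) (Phi χ φ s) p)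

/-- `h = (H_N, H₂∂₁Φ)`. -/
def hvec (χ : ℝ → ℝ) (φ : ℝ × ℝ → ℝ) (s : ℝ) (W : P2 → Fin 6 → ℝ) (p : P2) : ℝ × ℝ :=
  (HN χ φ s W p, W p 4 * D (0, 1, 0) (Phi χ φ s) p)

/-- `w = u − (∂ₜΨ, 0)`. -/
def wvec (χ : ℝ → ℝ) (φ : ℝ × ℝ → ℝ) (s : ℝ) (W : P2 → Fin 6 → ℝ) (p : P2) : ℝ × ℝ :=
  ((uvec χ φ s W p).1 - D (1, 0, 0) (Psi χ φ s) p, (uvec χ φ s W p).2)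

/-- Spatial divergence of a planar vector field. -/
def div2 (F : P2 → ℝ × ℝ) (p : P2) : ℝ :=
  D (0, 1, 0) (fun q => (F q).1) p + D (0, 0, 1) (fun q => (F q).2) p

/-- The boundary matrix `Ã₁(U,Ψ) = (A₁(U) − ∂ₜΨA₀(U) − ∂₂ΨA₂(U))/∂₁Φ`. -/
def At1 (A γ : ℝ) (χ : ℝ → ℝ) (φ : ℝ × ℝ → ℝ) (s : ℝ) (u : Fin 6 → ℝ) (p : P2) :
    Matrix (Fin 6) (Fin 6) ℝ :=
  (D (0, 1, 0) (Phi χ φ s) p)⁻¹ •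
    (Am A γ 0 u - D (1, 0, 0) (Psi χ φ s) p • A0m A γ u
      - D (0, 0, 1) (Psi χ φ s) p • Am A γ 1 u)

/-- Entrywise directional derivative of a matrix-valued map in the state
variable. -/
def mdir (F : (Fin 6 → ℝ) → Matrix (Fin 6) (Fin 6) ℝ) (u Y : Fin 6 → ℝ) :
    Matrix (Fin 6) (Fin 6) ℝ :=
  Matrix.of fun i j => fderiv ℝ (fun w => F w i j) u Y

/-- The zero-order operator `𝒞(Û,Ψ̂)` of the linearized problem. -/
def Cop (A γ : ℝ) (χ : ℝ → ℝ) (φ : ℝ × ℝ → ℝ) (s : ℝ) (W : P2 → Fin 6 → ℝ)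
    (p : P2) (Y : Fin 6 → ℝ) : Fin 6 → ℝ :=
  (mdir (A0m A γ) (W p) Y).mulVec (D (1, 0, 0) W p)
    + (mdir (fun w => At1 A γ χ φ s w p) (W p) Y).mulVec (D (0, 1, 0) W p)
    + (mdir (Am A γ 1) (W p) Y).mulVec (D (0, 0, 1) W p)

/-- The full linearized interior operator. -/
def Lop (A γ : ℝ) (χ : ℝ → ℝ) (φ : ℝ × ℝ → ℝ) (s : ℝ) (W U : P2 → Fin 6 → ℝ)
    (p : P2) : Fin 6 → ℝ :=
  (A0m A γ (W p)).mulVec (D (1, 0, 0) U p)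
    + (At1 A γ χ φ s (W p) p).mulVec (D (0, 1, 0) U p)
    + (Am A γ 1 (W p)).mulVec (D (0, 0, 1) U p)
    + Cop A γ χ φ s W p (U p)

/-- `Ω_t = (−∞,t] × ℝ²₊`. -/
def ΩT (t : ℝ) : Set P2 := {p | p.1 ≤ t ∧ 0 < p.2.1}

/-- The boundary `(−∞,t] × {x₁=0} × ℝ`, parametrized by `(t,x₂)`. -/
def bT (t : ℝ) : Set (ℝ × ℝ) := {q | q.1 ≤ t}

/-- The hplane `ℝ²₊`. -/
def hplane : Set (ℝ × ℝ) := {x | 0 < x.1}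

/-- Squared `L²(S)` norm of an `ℝ⁶`-valued function. -/
def L2V (S : Set P2) (U : P2 → Fin 6 → ℝ) : ℝ := ∫ p in S, ∑ i, (U p i) ^ 2

/-- Squared `L²(S)` norm of a scalar function. -/
def L2R (S : Set P2) (f : P2 → ℝ) : ℝ := ∫ p in S, (f p) ^ 2

/-- Squared `H¹(Ω_T)` norm of an `ℝ⁶`-valued function. -/
def H1V (T : ℝ) (U : P2 → Fin 6 → ℝ) : ℝ :=
  L2V (ΩT T) U + L2V (ΩT T) (D (1, 0, 0) U) + L2V (ΩT T) (D (0, 1, 0) U)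
    + L2V (ΩT T) (D (0, 0, 1) U)

/-- Squared `L²` norm over the boundary strip. -/
def L2B (T : ℝ) (f : ℝ × ℝ → ℝ) : ℝ := ∫ q in bT T, (f q) ^ 2

/-- Squared `H¹` norm over the boundary strip. -/
def H1B (T : ℝ) (f : ℝ × ℝ → ℝ) : ℝ :=
  L2B T f + L2B T (Db (1, 0) f) + L2B T (Db (0, 1) f)

/-- Squared `L²(ℝ²₊)` norm of an `ℝ⁶`-valued function at time `t`. -/
def L2slV (U : P2 → Fin 6 → ℝ) (t : ℝ) : ℝ := ∫ x in hplane, ∑ i, (U (t, x) i) ^ 2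

/-- Squared `L²(ℝ²₊)` norm of a scalar function at time `t`. -/
def L2slR (f : P2 → ℝ) (t : ℝ) : ℝ := ∫ x in hplane, (f (t, x)) ^ 2

/-- Hypotheses on the cut-off function `χ`. -/
def ChiHyp (χ : ℝ → ℝ) : Prop :=
  ContDiff ℝ (⊤ : ℕ∞) χ ∧ HasCompactSupport χ ∧
    (∀ x ∈ Set.Icc (-1 : ℝ) 1, χ x = 1) ∧ (∀ x, |deriv χ x| < 1 / 2)

/-- Regularity and `K`-boundedness of the basic state `(Û⁺,Û⁻,φ̂)`. -/
def StateReg (K : ℝ) (Up Um : P2 → Fin 6 → ℝ) (φh : ℝ × ℝ → ℝ) : Prop :=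
  ContDiff ℝ (⊤ : ℕ∞) Up ∧ ContDiff ℝ (⊤ : ℕ∞) Um ∧ ContDiff ℝ (⊤ : ℕ∞) φh ∧
    (∀ n : ℕ, n ≤ 2 → ∀ p, ‖iteratedFDeriv ℝ n Up p‖ ≤ K) ∧
    (∀ n : ℕ, n ≤ 2 → ∀ p, ‖iteratedFDeriv ℝ n Um p‖ ≤ K) ∧
    (∀ n : ℕ, n ≤ 3 → ∀ q, ‖iteratedFDeriv ℝ n φh q‖ ≤ K) ∧
    (∀ q, |φh q| < 1)

/-- (H1): hyperbolicity bounds on the basic state. -/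
def H1hyp (A γ ρ0 p0 T : ℝ) (Up Um : P2 → Fin 6 → ℝ) : Prop :=
  ∀ p ∈ ΩT T, ρ0 ≤ rho A γ (Up p 0) (Up p 5) ∧ ρ0 ≤ rho A γ (Um p 0) (Um p 5) ∧
    p0 ≤ Up p 0 ∧ p0 ≤ Um p 0

/-- (H2): the Rankine–Hugoniot boundary conditions for the basic state. -/
def H2hyp (T : ℝ) (χ : ℝ → ℝ) (φh : ℝ × ℝ → ℝ) (Up Um : P2 → Fin 6 → ℝ) : Prop :=
  ∀ t x₂ : ℝ, t ≤ T →
    Up (t, 0, x₂) 0 = Um (t, 0, x₂) 0 ∧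
    Up (t, 0, x₂) 1 = Um (t, 0, x₂) 1 ∧
    Up (t, 0, x₂) 2 = Um (t, 0, x₂) 2 ∧
    Hτ χ φh 1 Up (t, 0, x₂) = Hτ χ φh (-1) Um (t, 0, x₂) ∧
    Db (1, 0) φh (t, x₂) = vN χ φh 1 Up (t, 0, x₂)

/-- (H3): the normal magnetic field does not vanish on the boundary. -/
def H3hyp (κ0 T : ℝ) (χ : ℝ → ℝ) (φh : ℝ × ℝ → ℝ) (Up Um : P2 → Fin 6 → ℝ) : Prop :=
  ∀ t x₂ : ℝ, t ≤ T →
    κ0 ≤ |HN χ φh 1 Up (t, 0, x₂)| ∧ κ0 ≤ |HN χ φh (-1) Um (t, 0, x₂)|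

/-- (H4): the induction equations hold for the basic state. -/
def H4hyp (T : ℝ) (χ : ℝ → ℝ) (φh : ℝ × ℝ → ℝ) (Up Um : P2 → Fin 6 → ℝ) : Prop :=
  ∀ (W : P2 → Fin 6 → ℝ) (s : ℝ), (W = Up ∧ s = 1) ∨ (W = Um ∧ s = -1) →
    ∀ p ∈ ΩT T, ∀ k : Fin 2,
      D (1, 0, 0) (fun q => W q (hIx k)) p +
        (D (0, 1, 0) (Phi χ φh s) p)⁻¹ *
          ((wvec χ φh s W p).1 * D (0, 1, 0) (fun q => W q (hIx k)) p
            + (wvec χ φh s W p).2 * D (0, 0, 1) (fun q => W q (hIx k)) p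
            - (hvec χ φh s W p).1 * D (0, 1, 0) (fun q => W q (vIx k)) p
            - (hvec χ φh s W p).2 * D (0, 0, 1) (fun q => W q (vIx k)) p
            + W p (hIx k) * div2 (uvec χ φh s W) p) = 0

/-- (H5): divergence and jump constraints for the basic state at `t ≤ 0`. -/
def H5hyp (χ : ℝ → ℝ) (φh : ℝ × ℝ → ℝ) (Up Um : P2 → Fin 6 → ℝ) : Prop :=
  (∀ p : P2, p.1 ≤ 0 → 0 < p.2.1 →
    div2 (hvec χ φh 1 Up) p = 0 ∧ div2 (hvec χ φh (-1) Um) p = 0) ∧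
  (∀ t x₂ : ℝ, t ≤ 0 → HN χ φh 1 Up (t, 0, x₂) = HN χ φh (-1) Um (t, 0, x₂))

/-- (H6): `[∂₁v̂_N] = 0`. -/
def H6hyp (T : ℝ) (χ : ℝ → ℝ) (φh : ℝ × ℝ → ℝ) (Up Um : P2 → Fin 6 → ℝ) : Prop :=
  ∀ t x₂ : ℝ, t ≤ T →
    D (0, 1, 0) (vN χ φh 1 Up) (t, 0, x₂) + D (0, 1, 0) (vN χ φh (-1) Um) (t, 0, x₂) = 0


section FrontAux

open Set MeasureTheory

private lemma sqrt_add_le' {a b : ℝ} (ha : 0 ≤ a) (hb : 0 ≤ b) :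
    Real.sqrt (a + b) ≤ Real.sqrt a + Real.sqrt b := by
  have h : a + b ≤ (Real.sqrt a + Real.sqrt b) ^ 2 := by
    nlinarith [Real.sq_sqrt ha, Real.sq_sqrt hb, Real.sqrt_nonneg a, Real.sqrt_nonneg b]
  calc Real.sqrt (a + b) ≤ Real.sqrt ((Real.sqrt a + Real.sqrt b) ^ 2) := Real.sqrt_le_sqrt h
    _ = Real.sqrt a + Real.sqrt b := Real.sqrt_sq (by positivity)

private lemma norm_e1 : ‖((0 : ℝ), (1 : ℝ), (0 : ℝ))‖ = 1 := by
  simp [Prod.norm_def]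

private lemma norm_b01 : ‖((0 : ℝ), (1 : ℝ))‖ = 1 := by
  simp [Prod.norm_def]

private lemma fderiv_entry_bound {f : P2 → Fin 6 → ℝ} {K : ℝ}
    (h : ∀ p, ‖iteratedFDeriv ℝ 1 f p‖ ≤ K) (p v : P2) (i : Fin 6) :
    |fderiv ℝ f p v i| ≤ K * ‖v‖ := by
  have h1 : fderiv ℝ f p v = iteratedFDeriv ℝ 1 f p ![v] := by
    rw [iteratedFDeriv_one_apply]; simp
  calc |fderiv ℝ f p v i| = ‖fderiv ℝ f p v i‖ := (Real.norm_eq_abs _).symm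
    _ ≤ ‖fderiv ℝ f p v‖ := norm_le_pi_norm _ i
    _ = ‖iteratedFDeriv ℝ 1 f p ![v]‖ := by rw [h1]
    _ ≤ ‖iteratedFDeriv ℝ 1 f p‖ * ∏ j, ‖(![v] : Fin 1 → P2) j‖ :=
        (iteratedFDeriv ℝ 1 f p).le_opNorm _
    _ ≤ K * ‖v‖ := by
        simp only [Fin.prod_univ_one, Matrix.cons_val_zero]
        exact mul_le_mul_of_nonneg_right (h p) (norm_nonneg v)

private lemma fderiv_scalar_bound {f : ℝ × ℝ → ℝ} {K : ℝ}
    (h : ∀ q, ‖iteratedFDeriv ℝ 1 f q‖ ≤ K) (q v : ℝ × ℝ) :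
    |fderiv ℝ f q v| ≤ K * ‖v‖ := by
  have h1 : fderiv ℝ f q v = iteratedFDeriv ℝ 1 f q ![v] := by
    rw [iteratedFDeriv_one_apply]; simp
  calc |fderiv ℝ f q v| = ‖iteratedFDeriv ℝ 1 f q ![v]‖ := by
        rw [← h1]; exact (Real.norm_eq_abs _).symm
    _ ≤ ‖iteratedFDeriv ℝ 1 f q‖ * ∏ j, ‖(![v] : Fin 1 → ℝ × ℝ) j‖ :=
        (iteratedFDeriv ℝ 1 f q).le_opNorm _
    _ ≤ K * ‖v‖ := by
        simp only [Fin.prod_univ_one, Matrix.cons_val_zero]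
        exact mul_le_mul_of_nonneg_right (h q) (norm_nonneg v)

private lemma entry_bound {f : P2 → Fin 6 → ℝ} {K : ℝ}
    (h : ∀ p, ‖iteratedFDeriv ℝ 0 f p‖ ≤ K) (p : P2) (i : Fin 6) :
    |f p i| ≤ K := by
  calc |f p i| = ‖f p i‖ := (Real.norm_eq_abs _).symm
    _ ≤ ‖f p‖ := norm_le_pi_norm _ i
    _ = ‖iteratedFDeriv ℝ 0 f p‖ := (norm_iteratedFDeriv_zero).symm
    _ ≤ K := h p

/-- The projection `(t,x₁,x₂) ↦ (t,x₂)` as a continuous linear map. -/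
private def πb : P2 →L[ℝ] ℝ × ℝ :=
  (ContinuousLinearMap.fst ℝ ℝ (ℝ × ℝ)).prod
    ((ContinuousLinearMap.snd ℝ ℝ ℝ).comp (ContinuousLinearMap.snd ℝ ℝ (ℝ × ℝ)))

private lemma πb_apply (p : P2) : πb p = (p.1, p.2.2) := rfl

private lemma isOpen_strip : IsOpen {p : P2 | |p.2.1| < 1} := by
  have h : {p : P2 | |p.2.1| < 1} = (fun p : P2 => p.2.1) ⁻¹' (Set.Ioo (-1) 1) := by
    ext p; simp [abs_lt]
  rw [h]
  exact isOpen_Ioo.preimage (continuous_fst.comp continuous_snd)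

private lemma psi_eventuallyEq {χ : ℝ → ℝ} {φh : ℝ × ℝ → ℝ}
    (hχ1 : ∀ x ∈ Set.Icc (-1 : ℝ) 1, χ x = 1) {p : P2} (hp : |p.2.1| < 1) :
    Psi χ φh 1 =ᶠ[nhds p] fun q => φh (q.1, q.2.2) := by
  filter_upwards [isOpen_strip.mem_nhds hp] with q hq
  have hq' : |q.2.1| < 1 := hq
  have h1 : χ q.2.1 = 1 := hχ1 _ ⟨(abs_lt.mp hq').1.le, (abs_lt.mp hq').2.le⟩
  simp [Psi, one_mul, h1]

private lemma fderiv_psi_boundary {χ : ℝ → ℝ} {φh : ℝ × ℝ → ℝ}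
    (hχ1 : ∀ x ∈ Set.Icc (-1 : ℝ) 1, χ x = 1) (hφh : ContDiff ℝ (⊤ : ℕ∞) φh)
    {p : P2} (hp : |p.2.1| < 1) :
    fderiv ℝ (Psi χ φh 1) p = (fderiv ℝ φh (p.1, p.2.2)).comp πb := by
  rw [(psi_eventuallyEq hχ1 hp).fderiv_eq]
  have h1 : HasFDerivAt (fun q : P2 => φh (πb q)) ((fderiv ℝ φh (πb p)).comp πb) p :=
    ((hφh.differentiable (by simp) (πb p)).hasFDerivAt).comp p πb.hasFDerivAt
  exact h1.fderiv

private lemma DPsi_z {χ : ℝ → ℝ} {φh : ℝ × ℝ → ℝ}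
    (hχ1 : ∀ x ∈ Set.Icc (-1 : ℝ) 1, χ x = 1) (hφh : ContDiff ℝ (⊤ : ℕ∞) φh)
    {p : P2} (hp : |p.2.1| < 1) :
    D (0, 0, 1) (Psi χ φh 1) p = fderiv ℝ φh (p.1, p.2.2) (0, 1) := by
  show fderiv ℝ (Psi χ φh 1) p (0, 0, 1) = _
  rw [fderiv_psi_boundary hχ1 hφh hp]
  rfl

private lemma vN_boundary {χ : ℝ → ℝ} {φh : ℝ × ℝ → ℝ}
    (hχ1 : ∀ x ∈ Set.Icc (-1 : ℝ) 1, χ x = 1) (hφh : ContDiff ℝ (⊤ : ℕ∞) φh)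
    (W : P2 → Fin 6 → ℝ) {p : P2} (hp : |p.2.1| < 1) :
    vN χ φh 1 W p = W p 1 - W p 2 * fderiv ℝ φh (p.1, p.2.2) (0, 1) := by
  unfold vN
  rw [DPsi_z hχ1 hφh hp]

private lemma D1_vN_boundary {χ : ℝ → ℝ} {φh : ℝ × ℝ → ℝ} {Up : P2 → Fin 6 → ℝ}
    (hχ1 : ∀ x ∈ Set.Icc (-1 : ℝ) 1, χ x = 1) (hφh : ContDiff ℝ (⊤ : ℕ∞) φh)
    (hUp : ContDiff ℝ (⊤ : ℕ∞) Up) {p : P2} (hp : |p.2.1| < 1) :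
    D (0, 1, 0) (vN χ φh 1 Up) p
      = fderiv ℝ Up p (0, 1, 0) 1
        - fderiv ℝ φh (p.1, p.2.2) (0, 1) * fderiv ℝ Up p (0, 1, 0) 2 := by
  set L : ℝ × ℝ → ℝ := fun x => fderiv ℝ φh x (0, 1) with hLdef
  have hEq : vN χ φh 1 Up =ᶠ[nhds p] fun q => Up q 1 - Up q 2 * L (πb q) := by
    filter_upwards [isOpen_strip.mem_nhds hp] with q hq
    exact vN_boundary hχ1 hφh Up hq
  show fderiv ℝ (vN χ φh 1 Up) p (0, 1, 0) = _
  rw [hEq.fderiv_eq]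
  have hLsm : ContDiff ℝ (⊤ : ℕ∞) L := (hφh.fderiv_right (by exact_mod_cast le_top)).clm_apply contDiff_const
  have hUpd := hUp.differentiable (by simp)
  have h1 : HasFDerivAt (fun q : P2 => Up q 1)
      ((ContinuousLinearMap.proj (1 : Fin 6)).comp (fderiv ℝ Up p)) p :=
    (ContinuousLinearMap.proj (R := ℝ) (φ := fun _ : Fin 6 => ℝ) (1 : Fin 6)).hasFDerivAt.comp p
      (hUpd p).hasFDerivAt
  have h2 : HasFDerivAt (fun q : P2 => Up q 2)
      ((ContinuousLinearMap.proj (2 : Fin 6)).comp (fderiv ℝ Up p)) p :=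
    (ContinuousLinearMap.proj (R := ℝ) (φ := fun _ : Fin 6 => ℝ) (2 : Fin 6)).hasFDerivAt.comp p
      (hUpd p).hasFDerivAt
  have hG : HasFDerivAt (fun q : P2 => L (πb q)) ((fderiv ℝ L (πb p)).comp πb) p :=
    ((hLsm.differentiable (by simp) (πb p)).hasFDerivAt).comp p πb.hasFDerivAt
  have h3 := h1.sub (h2.mul hG)
  rw [show (fun q : P2 => Up q 1 - Up q 2 * L (πb q)) = ((fun q : P2 => Up q 1) - (fun q : P2 => Up q 2) * fun q => L (πb q)) from rfl, h3.fderiv]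
  have hz : (πb ((0 : ℝ), (1 : ℝ), (0 : ℝ)) : ℝ × ℝ) = 0 := rfl
  simp only [ContinuousLinearMap.coe_sub', Pi.sub_apply, ContinuousLinearMap.add_apply,
    ContinuousLinearMap.coe_smul', Pi.smul_apply, ContinuousLinearMap.coe_comp',
    Function.comp_apply, hz, map_zero, smul_eq_mul, mul_zero, zero_add,
    ContinuousLinearMap.proj_apply]
  have hLp : L (πb p) = fderiv ℝ φh (p.1, p.2.2) (0, 1) := rfl
  rw [hLp]

end FrontAux


section FrontAux2

open Set MeasureTheory

private lemma trace1d {h h' : ℝ → ℝ} (hd : ∀ x, HasDerivAt h (h' x) x)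
    (hc' : Continuous h')
    (hi : MeasureTheory.IntegrableOn (fun x => h x ^ 2) (Set.Ioi 0))
    (hi' : MeasureTheory.IntegrableOn (fun x => h' x ^ 2) (Set.Ioi 0)) :
    h 0 ^ 2 ≤ (∫ x in Set.Ioi (0 : ℝ), h x ^ 2) + ∫ x in Set.Ioi (0 : ℝ), h' x ^ 2 := by
  set M := (∫ x in Set.Ioi (0 : ℝ), h x ^ 2) + ∫ x in Set.Ioi (0 : ℝ), h' x ^ 2 with hMdef
  by_contra hcon
  push_neg at hcon
  have hcont : Continuous h := continuous_iff_continuousAt.mpr fun x => (hd x).continuousAt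
  have hsum : MeasureTheory.IntegrableOn (fun x => h x ^ 2 + h' x ^ 2) (Set.Ioi 0) :=
    hi.add hi'
  have key : ∀ x : ℝ, 0 < x → h 0 ^ 2 - M ≤ h x ^ 2 := by
    intro x hx
    have hftc : ∫ t in (0 : ℝ)..x, (2 * h t * h' t) = h x ^ 2 - h 0 ^ 2 := by
      apply intervalIntegral.integral_eq_sub_of_hasDerivAt
      · intro t _
        have := (hd t).fun_pow 2
        simpa [pow_one] using this
      · exact ((continuous_const.mul hcont).mul hc').intervalIntegrable _ _
    have hii1 : IntervalIntegrable (fun t => -(h t ^ 2 + h' t ^ 2)) volume 0 x :=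
      (((hcont.pow 2).add (hc'.pow 2)).neg).intervalIntegrable _ _
    have hii2 : IntervalIntegrable (fun t => 2 * h t * h' t) volume 0 x :=
      ((continuous_const.mul hcont).mul hc').intervalIntegrable _ _
    have hmono : ∫ t in (0 : ℝ)..x, -(h t ^ 2 + h' t ^ 2)
        ≤ ∫ t in (0 : ℝ)..x, 2 * h t * h' t := by
      apply intervalIntegral.integral_mono_on hx.le hii1 hii2
      intro t _
      nlinarith [sq_nonneg (h t + h' t)]
    have hbound : ∫ t in (0 : ℝ)..x, (h t ^ 2 + h' t ^ 2) ≤ M := by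
      rw [intervalIntegral.integral_of_le hx.le]
      have h1 : ∫ t in Set.Ioc 0 x, (h t ^ 2 + h' t ^ 2)
          ≤ ∫ t in Set.Ioi 0, (h t ^ 2 + h' t ^ 2) := by
        apply MeasureTheory.setIntegral_mono_set hsum
        · filter_upwards with t; positivity
        · exact (Set.Ioc_subset_Ioi_self).eventuallyLE
      have h2 : ∫ t in Set.Ioi (0 : ℝ), (h t ^ 2 + h' t ^ 2) = M := by
        rw [hMdef]; exact MeasureTheory.integral_add hi hi'
      linarith
    have hneg : ∫ t in (0 : ℝ)..x, -(h t ^ 2 + h' t ^ 2)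
        = -∫ t in (0 : ℝ)..x, (h t ^ 2 + h' t ^ 2) := intervalIntegral.integral_neg
    nlinarith [hftc, hmono, hbound, hneg]
  set δ := h 0 ^ 2 - M with hδ
  have hδpos : 0 < δ := by simp only [hδ]; linarith
  have hfin := hi.measure_ge_lt_top hδpos
  have hms : MeasurableSet {x : ℝ | δ ≤ h x ^ 2} :=
    measurableSet_le measurable_const ((hcont.pow 2).measurable)
  have hsub : Set.Ioi (0 : ℝ) ⊆ {x : ℝ | δ ≤ h x ^ 2} := fun x hx => key x hx
  have hrw : (volume.restrict (Set.Ioi (0 : ℝ))) {x : ℝ | δ ≤ h x ^ 2} = ⊤ := by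
    rw [MeasureTheory.Measure.restrict_apply hms,
      Set.inter_eq_self_of_subset_right hsub]
    exact Real.volume_Ioi
  rw [hrw] at hfin
  exact absurd hfin (by simp)

/-- Coordinate reshuffle `(t,x₁,x₂) ↦ ((t,x₂),x₁)`. -/
private def eqv : (ℝ × ℝ × ℝ) ≃ᵐ (ℝ × ℝ) × ℝ :=
  ((MeasurableEquiv.refl ℝ).prodCongr (MeasurableEquiv.prodComm (α := ℝ) (β := ℝ))).trans
    (MeasurableEquiv.prodAssoc (α := ℝ) (β := ℝ) (γ := ℝ)).symm

private lemma eqv_apply (p : P2) : eqv p = ((p.1, p.2.2), p.2.1) := rfl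

private lemma eqv_symm_apply (z : (ℝ × ℝ) × ℝ) : eqv.symm z = (z.1.1, z.2, z.1.2) := rfl

private lemma eqv_mp : MeasureTheory.MeasurePreserving eqv
    (volume : Measure (ℝ × ℝ × ℝ)) (volume : Measure ((ℝ × ℝ) × ℝ)) := by
  have h1 : MeasureTheory.MeasurePreserving
      (Prod.map (id : ℝ → ℝ) (Prod.swap : ℝ × ℝ → ℝ × ℝ))
      (volume : Measure (ℝ × ℝ × ℝ)) (volume : Measure (ℝ × ℝ × ℝ)) := by
    rw [MeasureTheory.Measure.volume_eq_prod, MeasureTheory.Measure.volume_eq_prod (α := ℝ) (β := ℝ)]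
    exact (MeasureTheory.MeasurePreserving.id volume).prod
      MeasureTheory.Measure.measurePreserving_swap
  have h2 : MeasureTheory.MeasurePreserving
      (MeasurableEquiv.prodAssoc (α := ℝ) (β := ℝ) (γ := ℝ)).symm
      (volume : Measure (ℝ × ℝ × ℝ)) (volume : Measure ((ℝ × ℝ) × ℝ)) :=
    (MeasureTheory.volume_preserving_prodAssoc (α₁ := ℝ) (β₁ := ℝ) (γ₁ := ℝ)).symm _
  have h3 := h2.comp h1
  have hfe : (⇑(MeasurableEquiv.prodAssoc (α := ℝ) (β := ℝ) (γ := ℝ)).symm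
      ∘ Prod.map (id : ℝ → ℝ) (Prod.swap : ℝ × ℝ → ℝ × ℝ)) = ⇑eqv := rfl
  rwa [hfe] at h3

private lemma bT_eq (T : ℝ) : bT T = Set.Iic T ×ˢ (Set.univ : Set ℝ) := by
  ext q; simp [bT]

private lemma measurableSet_bT (T : ℝ) : MeasurableSet (bT T) := by
  rw [bT_eq]; exact (measurableSet_Iic).prod MeasurableSet.univ

private lemma fubini_key (T : ℝ) (F : P2 → ℝ) (hF : MeasureTheory.IntegrableOn F (ΩT T)) :
    (∀ᵐ q ∂(volume.restrict (bT T)),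
        MeasureTheory.IntegrableOn (fun x₁ => F (q.1, x₁, q.2)) (Set.Ioi 0)) ∧
    MeasureTheory.Integrable (fun q => ∫ x₁ in Set.Ioi (0 : ℝ), F (q.1, x₁, q.2))
      (volume.restrict (bT T)) ∧
    (∫ q in bT T, ∫ x₁ in Set.Ioi (0 : ℝ), F (q.1, x₁, q.2)) = ∫ p in ΩT T, F p := by
  have hemb := eqv.measurableEmbedding
  have hmp := eqv_mp
  have hpre : ⇑eqv ⁻¹' ((bT T) ×ˢ (Set.Ioi 0)) = ΩT T := by
    ext p
    simp [Set.mem_prod, eqv_apply, bT, ΩT, and_comm]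
  have hG : MeasureTheory.IntegrableOn (fun z => F (eqv.symm z)) ((bT T) ×ˢ (Set.Ioi 0)) := by
    rw [MeasureTheory.IntegrableOn,
      ← (hmp.restrict_preimage_emb hemb ((bT T) ×ˢ (Set.Ioi 0))).integrable_comp_emb hemb]
    have hfe : (fun z => F (eqv.symm z)) ∘ ⇑eqv = F := rfl
    rw [hfe, hpre]
    exact hF
  have hG' : MeasureTheory.Integrable (fun z => F (eqv.symm z))
      ((volume.restrict (bT T)).prod (volume.restrict (Set.Ioi 0))) := by
    rw [MeasureTheory.Measure.prod_restrict]
    rw [MeasureTheory.IntegrableOn, MeasureTheory.Measure.volume_eq_prod] at hG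
    exact hG
  refine ⟨?_, ?_, ?_⟩
  · filter_upwards [hG'.prod_right_ae] with q hq
    exact hq
  · exact hG'.integral_prod_left
  · have h1 : ∫ z in (bT T) ×ˢ (Set.Ioi 0), F (eqv.symm z) = ∫ p in ΩT T, F p := by
      have h := hmp.setIntegral_preimage_emb hemb (fun z => F (eqv.symm z))
        ((bT T) ×ˢ (Set.Ioi 0))
      rw [hpre] at h
      exact h.symm
    have h2 : ∫ z in (bT T) ×ˢ (Set.Ioi 0), F (eqv.symm z)
        = ∫ x in bT T, ∫ y in Set.Ioi (0 : ℝ), F (eqv.symm (x, y)) := by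
      rw [MeasureTheory.Measure.volume_eq_prod]
      exact MeasureTheory.setIntegral_prod _ (by
        rwa [MeasureTheory.IntegrableOn, MeasureTheory.Measure.volume_eq_prod] at hG)
    exact h2.symm.trans h1

end FrontAux2


private lemma abs_sub_le'' (a b : ℝ) : |a - b| ≤ |a| + |b| := by
  calc |a - b| = |a + -b| := by ring_nf
    _ ≤ |a| + |-b| := abs_add_le _ _
    _ = |a| + |b| := by rw [abs_neg]


set_option maxHeartbeats 1000000 in
private lemma ptwise_alg {K Ck M x1 x2 g b2 d2 f0 a dφ S : ℝ}
    (hCk : Ck = K + K * K) (hM : M = 4 * (1 + K ^ 2 + Ck ^ 2) + 1) (hK : 0 < K)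
    (hg : |g| ≤ K) (hb2 : |b2| ≤ K) (ha : |a| ≤ Ck)
    (heq : dφ = (x1 - x2 * g) - b2 * d2 + f0 * a)
    (hxS : x1 ^ 2 + x2 ^ 2 ≤ S) (hS0 : 0 ≤ S) :
    dφ ^ 2 ≤ M * ((S + d2 ^ 2) + f0 ^ 2) := by
  have hg2 : g ^ 2 ≤ K ^ 2 := by nlinarith [hg, abs_nonneg g, sq_abs g]
  have hb22 : b2 ^ 2 ≤ K ^ 2 := by nlinarith [hb2, abs_nonneg b2, sq_abs b2]
  have ha2 : a ^ 2 ≤ Ck ^ 2 := by nlinarith [ha, abs_nonneg a, sq_abs a]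
  have h4 : dφ ^ 2 ≤ 4 * (x1 ^ 2 + (x2 * g) ^ 2 + (b2 * d2) ^ 2 + (f0 * a) ^ 2) := by
    rw [heq]
    nlinarith [sq_nonneg (x1 + x2 * g), sq_nonneg (x1 + b2 * d2), sq_nonneg (x1 - f0 * a),
      sq_nonneg (x2 * g - b2 * d2), sq_nonneg (x2 * g + f0 * a), sq_nonneg (b2 * d2 + f0 * a)]
  have e2 : (x2 * g) ^ 2 ≤ K ^ 2 * x2 ^ 2 := by nlinarith [hg2, sq_nonneg x2]
  have e3 : (b2 * d2) ^ 2 ≤ K ^ 2 * d2 ^ 2 := by nlinarith [hb22, sq_nonneg d2]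
  have e4 : (f0 * a) ^ 2 ≤ Ck ^ 2 * f0 ^ 2 := by nlinarith [ha2, sq_nonneg f0]
  have hKsq : (0 : ℝ) ≤ K ^ 2 := sq_nonneg K
  have hCksq : (0 : ℝ) ≤ Ck ^ 2 := sq_nonneg Ck
  subst hM
  nlinarith [h4, e2, e3, e4, hxS, hS0, mul_nonneg hKsq hS0, mul_nonneg hCksq hS0,
    mul_nonneg hKsq (sub_nonneg.mpr hxS), mul_nonneg hCksq (sub_nonneg.mpr hxS),
    sub_nonneg.mpr hxS, sq_nonneg d2, sq_nonneg f0, sq_nonneg x1, sq_nonneg x2,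
    mul_nonneg hCksq (sq_nonneg d2), mul_nonneg hKsq (sq_nonneg f0),
    mul_nonneg hCksq (sq_nonneg f0), mul_nonneg hKsq (sq_nonneg d2),
    mul_nonneg hKsq (sq_nonneg x1), mul_nonneg hKsq (sq_nonneg x2)]


/-- **Estimate of `∂ₜφ` from the boundary condition** (inequality (4.29)).
There is `C = C(K) > 0` such that whenever `U⁺` and `φ` are `C¹`, vanish in
the past, satisfy the boundary condition `v_N⁺ = ∂₀φ − φ∂₁v̂_N⁺` on
`∂Ω_T`, and all norms below are finite, then
`‖∂ₜφ‖_{L²(∂Ω_T)} ≤ C(‖U⁺‖_{L²(Ω_T)} + ‖∂₁U⁺‖_{L²(Ω_T)}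
   + ‖φ‖_{L²(∂Ω_T)} + ‖∂₂φ‖_{L²(∂Ω_T)})`. -/
theorem front_time_derivative_estimate (K : ℝ) (hK : 0 < K) :
    ∃ C : ℝ, 0 < C ∧
      ∀ (T : ℝ) (χ : ℝ → ℝ) (φh : ℝ × ℝ → ℝ) (Up Um : P2 → Fin 6 → ℝ),
        ChiHyp χ → StateReg K Up Um φh →
      ∀ (Ud : P2 → Fin 6 → ℝ) (φ : ℝ × ℝ → ℝ),
        ContDiff ℝ 1 Ud → ContDiff ℝ 1 φ →
        (∀ p : P2, p.1 < 0 → Ud p = 0) → (∀ q : ℝ × ℝ, q.1 < 0 → φ q = 0) →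
        -- the boundary condition v_N⁺ = ∂₀φ − φ∂₁v̂_N⁺ on ∂Ω_T
        (∀ t x₂ : ℝ, t ≤ T →
          vN χ φh 1 Ud (t, 0, x₂) =
            (Db (1, 0) φ (t, x₂) + Up (t, 0, x₂) 2 * Db (0, 1) φ (t, x₂))
              - φ (t, x₂) * D (0, 1, 0) (vN χ φh 1 Up) (t, 0, x₂)) →
        -- finiteness of the norms involved
        MeasureTheory.IntegrableOn (fun p => ∑ i, (Ud p i) ^ 2) (ΩT T) →
        MeasureTheory.IntegrableOn
          (fun p => ∑ i, (D (0, 1, 0) Ud p i) ^ 2) (ΩT T) →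
        MeasureTheory.IntegrableOn (fun q => (φ q) ^ 2) (bT T) →
        MeasureTheory.IntegrableOn (fun q => (Db (0, 1) φ q) ^ 2) (bT T) →
        MeasureTheory.IntegrableOn (fun q => (Db (1, 0) φ q) ^ 2) (bT T) →
        Real.sqrt (L2B T (Db (1, 0) φ)) ≤
          C * (Real.sqrt (L2V (ΩT T) Ud) + Real.sqrt (L2V (ΩT T) (D (0, 1, 0) Ud))
            + Real.sqrt (L2B T φ) + Real.sqrt (L2B T (Db (0, 1) φ))) := by
  classical
  set Ck : ℝ := K + K * K with hCkdef
  set M : ℝ := 4 * (1 + K ^ 2 + Ck ^ 2) + 1 with hMdef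
  have hM0 : 0 < M := by positivity
  refine ⟨Real.sqrt M, Real.sqrt_pos.mpr hM0, ?_⟩
  intro T χ φh Up Um hχ hreg Ud φ hUd hφ _ _ hbc hI1 hI2 hI3 hI4 hI5
  obtain ⟨hχC, hχsupp, hχ1, hχd⟩ := hχ
  obtain ⟨hUpC, hUmC, hφhC, hUpK, hUmK, hφhK, hφh1⟩ := hreg
  obtain ⟨hae₁, hin₁, heq₁⟩ := fubini_key T (fun p => ∑ i, (Ud p i) ^ 2) hI1
  obtain ⟨hae₂, hin₂, heq₂⟩ := fubini_key T (fun p => ∑ i, (D (0, 1, 0) Ud p i) ^ 2) hI2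
  -- pointwise bound on the boundary
  have hptwise : ∀ᵐ q ∂(volume.restrict (bT T)),
      (Db (1, 0) φ q) ^ 2 ≤ M *
        ((((∫ x₁ in Set.Ioi (0 : ℝ), ∑ i, (Ud ((q.1 : ℝ), x₁, (q.2 : ℝ)) i) ^ 2)
          + ∫ x₁ in Set.Ioi (0 : ℝ), ∑ i, (D (0, 1, 0) Ud ((q.1 : ℝ), x₁, (q.2 : ℝ)) i) ^ 2)
          + (Db (0, 1) φ q) ^ 2) + (φ q) ^ 2) := by
    filter_upwards [hae₁, hae₂, MeasureTheory.ae_restrict_mem (measurableSet_bT T)]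
      with q hq1 hq2 hqT
    have hqT' : q.1 ≤ T := hqT
    have hUdC : Continuous Ud := hUd.continuous
    have hDC : Continuous (fun p : P2 => fderiv ℝ Ud p) := hUd.continuous_fderiv (by norm_num)
    have hc : Continuous (fun x : ℝ => ((q.1, x, q.2) : P2)) :=
      continuous_const.prodMk (continuous_id.prodMk continuous_const)
    -- trace estimate
    have hcompInt : ∀ i : Fin 6,
        MeasureTheory.IntegrableOn (fun x => (Ud (q.1, x, q.2) i) ^ 2) (Set.Ioi 0) := by
      intro i
      refine hq1.mono' (((((continuous_apply i).comp (hUdC.comp hc))).pow 2)).aestronglyMeasurable ?_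
      filter_upwards with x
      rw [Real.norm_eq_abs, abs_of_nonneg (sq_nonneg _)]
      exact Finset.single_le_sum (f := fun j => (Ud (q.1, x, q.2) j) ^ 2)
        (fun j _ => sq_nonneg _) (Finset.mem_univ i)
    have hcompInt' : ∀ i : Fin 6,
        MeasureTheory.IntegrableOn (fun x => (D (0, 1, 0) Ud (q.1, x, q.2) i) ^ 2)
          (Set.Ioi 0) := by
      intro i
      refine hq2.mono' ((((continuous_apply i).comp
        (((hDC.comp hc).clm_apply continuous_const))).pow 2)).aestronglyMeasurable ?_
      filter_upwards with x
      rw [Real.norm_eq_abs, abs_of_nonneg (sq_nonneg _)]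
      exact Finset.single_le_sum (f := fun j => (D (0, 1, 0) Ud (q.1, x, q.2) j) ^ 2)
        (fun j _ => sq_nonneg _) (Finset.mem_univ i)
    have htr : ∀ i : Fin 6, (Ud (q.1, 0, q.2) i) ^ 2 ≤
        (∫ x in Set.Ioi (0 : ℝ), (Ud (q.1, x, q.2) i) ^ 2)
          + ∫ x in Set.Ioi (0 : ℝ), (D (0, 1, 0) Ud (q.1, x, q.2) i) ^ 2 := by
      intro i
      refine trace1d (h := fun x => Ud (q.1, x, q.2) i)
        (h' := fun x => D (0, 1, 0) Ud (q.1, x, q.2) i) ?_ ?_ (hcompInt i) (hcompInt' i)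
      · intro x
        have hc0 : HasDerivAt (fun x : ℝ => ((q.1, x, q.2) : P2))
            ((0 : ℝ), (1 : ℝ), (0 : ℝ)) x :=
          (hasDerivAt_const x q.1).prodMk ((hasDerivAt_id x).prodMk (hasDerivAt_const x q.2))
        have h1 : HasDerivAt (fun x : ℝ => Ud (q.1, x, q.2))
            (fderiv ℝ Ud (q.1, x, q.2) (0, 1, 0)) x :=
          ((hUd.differentiable (by norm_num) _).hasFDerivAt).comp_hasDerivAt x hc0
        exact ((ContinuousLinearMap.proj (R := ℝ) (φ := fun _ : Fin 6 => ℝ)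
          i).hasFDerivAt).comp_hasDerivAt x h1
      · exact (continuous_apply i).comp ((hDC.comp hc).clm_apply continuous_const)
    have htrace : ∑ i, (Ud (q.1, 0, q.2) i) ^ 2 ≤
        (∫ x₁ in Set.Ioi (0 : ℝ), ∑ i, (Ud (q.1, x₁, q.2) i) ^ 2)
          + ∫ x₁ in Set.Ioi (0 : ℝ), ∑ i, (D (0, 1, 0) Ud (q.1, x₁, q.2) i) ^ 2 := by
      calc ∑ i, (Ud (q.1, 0, q.2) i) ^ 2
          ≤ ∑ i : Fin 6, ((∫ x in Set.Ioi (0 : ℝ), (Ud (q.1, x, q.2) i) ^ 2)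
            + ∫ x in Set.Ioi (0 : ℝ), (D (0, 1, 0) Ud (q.1, x, q.2) i) ^ 2) :=
            Finset.sum_le_sum fun i _ => htr i
        _ = (∑ i : Fin 6, ∫ x in Set.Ioi (0 : ℝ), (Ud (q.1, x, q.2) i) ^ 2)
            + ∑ i : Fin 6, ∫ x in Set.Ioi (0 : ℝ), (D (0, 1, 0) Ud (q.1, x, q.2) i) ^ 2 :=
            Finset.sum_add_distrib
        _ = (∫ x₁ in Set.Ioi (0 : ℝ), ∑ i, (Ud (q.1, x₁, q.2) i) ^ 2)
            + ∫ x₁ in Set.Ioi (0 : ℝ), ∑ i, (D (0, 1, 0) Ud (q.1, x₁, q.2) i) ^ 2 := by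
            rw [← MeasureTheory.integral_finset_sum _ (fun i _ => hcompInt i),
              ← MeasureTheory.integral_finset_sum _ (fun i _ => hcompInt' i)]
    -- boundary condition algebra
    have hp0 : |(((q.1 : ℝ), (0 : ℝ), (q.2 : ℝ)) : P2).2.1| < 1 := by norm_num
    have hvNUd := vN_boundary hχ1 hφhC Ud hp0
    have hD1 := D1_vN_boundary hχ1 hφhC hUpC hp0
    have hbcq := hbc q.1 q.2 hqT'
    have hqe : ((q.1, q.2) : ℝ × ℝ) = q := rfl
    rw [hqe] at hbcq
    dsimp only at hvNUd hD1
    -- bounds on the coefficients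
    have hK1 : ∀ p : P2, ‖iteratedFDeriv ℝ 1 Up p‖ ≤ K := fun p => hUpK 1 (by norm_num) p
    have hK0 : ∀ p : P2, ‖iteratedFDeriv ℝ 0 Up p‖ ≤ K := fun p => hUpK 0 (by norm_num) p
    have hKφ : ∀ r : ℝ × ℝ, ‖iteratedFDeriv ℝ 1 φh r‖ ≤ K := fun r => hφhK 1 (by norm_num) r
    have hg : |fderiv ℝ φh (q.1, q.2) ((0 : ℝ), (1 : ℝ))| ≤ K := by
      have := fderiv_scalar_bound hKφ (q.1, q.2) (0, 1)
      rwa [norm_b01, mul_one] at this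
    have hd1 : |fderiv ℝ Up (q.1, 0, q.2) ((0 : ℝ), (1 : ℝ), (0 : ℝ)) 1| ≤ K := by
      have := fderiv_entry_bound hK1 (q.1, 0, q.2) (0, 1, 0) 1
      rwa [norm_e1, mul_one] at this
    have hd2 : |fderiv ℝ Up (q.1, 0, q.2) ((0 : ℝ), (1 : ℝ), (0 : ℝ)) 2| ≤ K := by
      have := fderiv_entry_bound hK1 (q.1, 0, q.2) (0, 1, 0) 2
      rwa [norm_e1, mul_one] at this
    have hu2 : |Up (q.1, 0, q.2) 2| ≤ K := entry_bound hK0 (q.1, 0, q.2) 2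
    have haCk : |D (0, 1, 0) (vN χ φh 1 Up) (q.1, 0, q.2)| ≤ Ck := by
      rw [hD1]
      calc |fderiv ℝ Up (q.1, 0, q.2) (0, 1, 0) 1
            - fderiv ℝ φh (q.1, q.2) (0, 1) * fderiv ℝ Up (q.1, 0, q.2) (0, 1, 0) 2|
          ≤ |fderiv ℝ Up (q.1, 0, q.2) (0, 1, 0) 1|
            + |fderiv ℝ φh (q.1, q.2) (0, 1) * fderiv ℝ Up (q.1, 0, q.2) (0, 1, 0) 2| :=
            abs_sub_le'' _ _
        _ ≤ K + K * K := by
            rw [abs_mul]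
            exact add_le_add hd1 (mul_le_mul hg hd2 (abs_nonneg _) hK.le)
        _ = Ck := hCkdef.symm
    have heqφ : Db (1, 0) φ q = (Ud (q.1, 0, q.2) 1
          - Ud (q.1, 0, q.2) 2 * fderiv ℝ φh (q.1, q.2) ((0 : ℝ), (1 : ℝ)))
        - Up (q.1, 0, q.2) 2 * Db (0, 1) φ q
        + φ q * D (0, 1, 0) (vN χ φh 1 Up) (q.1, 0, q.2) := by
      rw [hvNUd] at hbcq
      linarith [hbcq]
    have hx12 : (Ud (q.1, 0, q.2) 1) ^ 2 + (Ud (q.1, 0, q.2) 2) ^ 2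
        ≤ ∑ i, (Ud (q.1, 0, q.2) i) ^ 2 := by
      have hpair : ∑ i ∈ ({1, 2} : Finset (Fin 6)), (Ud (q.1, 0, q.2) i) ^ 2
          = (Ud (q.1, 0, q.2) 1) ^ 2 + (Ud (q.1, 0, q.2) 2) ^ 2 :=
        Finset.sum_pair (by decide)
      rw [← hpair]
      exact Finset.sum_le_sum_of_subset_of_nonneg (Finset.subset_univ _)
        (fun i _ _ => sq_nonneg _)
    have hS0 : (0 : ℝ) ≤ (∫ x₁ in Set.Ioi (0 : ℝ), ∑ i, (Ud (q.1, x₁, q.2) i) ^ 2)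
        + ∫ x₁ in Set.Ioi (0 : ℝ), ∑ i, (D (0, 1, 0) Ud (q.1, x₁, q.2) i) ^ 2 :=
      le_trans (Finset.sum_nonneg fun i _ => sq_nonneg _) htrace
    have hxS := le_trans hx12 htrace
    exact ptwise_alg hCkdef hMdef hK hg hu2 haCk heqφ hxS hS0
  -- integrate the pointwise bound
  have hIa : MeasureTheory.Integrable (fun q : ℝ × ℝ =>
      (∫ x₁ in Set.Ioi (0 : ℝ), ∑ i, (Ud ((q.1 : ℝ), x₁, (q.2 : ℝ)) i) ^ 2)
        + ∫ x₁ in Set.Ioi (0 : ℝ), ∑ i, (D (0, 1, 0) Ud ((q.1 : ℝ), x₁, (q.2 : ℝ)) i) ^ 2)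
      (volume.restrict (bT T)) := hin₁.add hin₂
  have hIb : MeasureTheory.Integrable (fun q : ℝ × ℝ =>
      ((∫ x₁ in Set.Ioi (0 : ℝ), ∑ i, (Ud ((q.1 : ℝ), x₁, (q.2 : ℝ)) i) ^ 2)
        + ∫ x₁ in Set.Ioi (0 : ℝ), ∑ i, (D (0, 1, 0) Ud ((q.1 : ℝ), x₁, (q.2 : ℝ)) i) ^ 2)
        + (Db (0, 1) φ q) ^ 2) (volume.restrict (bT T)) := hIa.add hI4
  have hIc : MeasureTheory.Integrable (fun q : ℝ × ℝ =>
      (((∫ x₁ in Set.Ioi (0 : ℝ), ∑ i, (Ud ((q.1 : ℝ), x₁, (q.2 : ℝ)) i) ^ 2)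
        + ∫ x₁ in Set.Ioi (0 : ℝ), ∑ i, (D (0, 1, 0) Ud ((q.1 : ℝ), x₁, (q.2 : ℝ)) i) ^ 2)
        + (Db (0, 1) φ q) ^ 2) + (φ q) ^ 2) (volume.restrict (bT T)) := hIb.add hI3
  have hIntR := hIc.const_mul M
  have hmain : ∫ q in bT T, (Db (1, 0) φ q) ^ 2 ≤ M *
      (((((∫ p in ΩT T, ∑ i, (Ud p i) ^ 2)
        + ∫ p in ΩT T, ∑ i, (D (0, 1, 0) Ud p i) ^ 2)
        + ∫ q in bT T, (Db (0, 1) φ q) ^ 2) + ∫ q in bT T, (φ q) ^ 2)) := by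
    have h1 := MeasureTheory.integral_mono_ae hI5 hIntR hptwise
    rw [MeasureTheory.integral_const_mul] at h1
    have hadd : (∫ q in bT T,
        ((((∫ x₁ in Set.Ioi (0 : ℝ), ∑ i, (Ud ((q.1 : ℝ), x₁, (q.2 : ℝ)) i) ^ 2)
          + ∫ x₁ in Set.Ioi (0 : ℝ), ∑ i, (D (0, 1, 0) Ud ((q.1 : ℝ), x₁, (q.2 : ℝ)) i) ^ 2)
          + (Db (0, 1) φ q) ^ 2) + (φ q) ^ 2))
        = ((((∫ p in ΩT T, ∑ i, (Ud p i) ^ 2)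
          + ∫ p in ΩT T, ∑ i, (D (0, 1, 0) Ud p i) ^ 2)
          + ∫ q in bT T, (Db (0, 1) φ q) ^ 2) + ∫ q in bT T, (φ q) ^ 2) := by
      rw [MeasureTheory.integral_add hIb hI3, MeasureTheory.integral_add hIa hI4,
        MeasureTheory.integral_add hin₁ hin₂, heq₁, heq₂]
    rw [hadd] at h1
    exact h1
  -- nonnegativity
  have hA0 : (0 : ℝ) ≤ ∫ p in ΩT T, ∑ i, (Ud p i) ^ 2 :=
    MeasureTheory.integral_nonneg fun p => Finset.sum_nonneg fun i _ => sq_nonneg _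
  have hB0 : (0 : ℝ) ≤ ∫ p in ΩT T, ∑ i, (D (0, 1, 0) Ud p i) ^ 2 :=
    MeasureTheory.integral_nonneg fun p => Finset.sum_nonneg fun i _ => sq_nonneg _
  have hE0 : (0 : ℝ) ≤ ∫ q in bT T, (Db (0, 1) φ q) ^ 2 :=
    MeasureTheory.integral_nonneg fun q => sq_nonneg _
  have hD0 : (0 : ℝ) ≤ ∫ q in bT T, (φ q) ^ 2 :=
    MeasureTheory.integral_nonneg fun q => sq_nonneg _
  -- assemble
  show Real.sqrt (∫ q in bT T, (Db (1, 0) φ q) ^ 2) ≤ Real.sqrt M *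
    (Real.sqrt (∫ p in ΩT T, ∑ i, (Ud p i) ^ 2)
      + Real.sqrt (∫ p in ΩT T, ∑ i, (D (0, 1, 0) Ud p i) ^ 2)
      + Real.sqrt (∫ q in bT T, (φ q) ^ 2)
      + Real.sqrt (∫ q in bT T, (Db (0, 1) φ q) ^ 2))
  set A := ∫ p in ΩT T, ∑ i, (Ud p i) ^ 2
  set B := ∫ p in ΩT T, ∑ i, (D (0, 1, 0) Ud p i) ^ 2
  set E := ∫ q in bT T, (Db (0, 1) φ q) ^ 2
  set Dd := ∫ q in bT T, (φ q) ^ 2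
  have hs3 : Real.sqrt (A + B) ≤ Real.sqrt A + Real.sqrt B := sqrt_add_le' hA0 hB0
  have hs2 : Real.sqrt ((A + B) + E) ≤ Real.sqrt (A + B) + Real.sqrt E :=
    sqrt_add_le' (by linarith) hE0
  have hs1 : Real.sqrt (((A + B) + E) + Dd) ≤ Real.sqrt ((A + B) + E) + Real.sqrt Dd :=
    sqrt_add_le' (by linarith) hD0
  calc Real.sqrt (∫ q in bT T, (Db (1, 0) φ q) ^ 2)
      ≤ Real.sqrt (M * (((A + B) + E) + Dd)) := Real.sqrt_le_sqrt hmain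
    _ = Real.sqrt M * Real.sqrt (((A + B) + E) + Dd) := Real.sqrt_mul hM0.le _
    _ ≤ Real.sqrt M * (Real.sqrt A + Real.sqrt B + Real.sqrt Dd + Real.sqrt E) := by
        have h6 : Real.sqrt (((A + B) + E) + Dd)
            ≤ Real.sqrt A + Real.sqrt B + Real.sqrt Dd + Real.sqrt E := by
          linarith [hs1, hs2, hs3]
        exact mul_le_mul_of_nonneg_left h6 (Real.sqrt_nonneg M)


end
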